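/- Let N, m ≥ 1 and for i = 1,…,N let κ_i > 0 and ω_i > 0 be real numbers and ψ_i ∈ ℝ^m. For every ω ≥ 0, the m×m complex matrix P(jω) = Σ_{i=1}^N (1/((jω)² + κ_i(jω) + ω_i²))·ψ_iψ_iᵀ is well defined (all denominators are nonzero), its Hermitian-imaginary part satisfies the identity −(1/2)·j·(P(jω) − P(jω)ᴴ) = −ω·Σ_{i=1}^N (κ_i/((ω_i² − ω²)² + ω²κ_i²))·ψ_iψ_iᵀ, and this matrix is negative semidefinite. -/

import Mathlib

open Matrix Filter Topology ComplexOrder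

lemma aux_outer_quad {n : Type*} [Fintype n] (v : n → ℝ) (x : n → ℂ) :
    star x ⬝ᵥ ((Matrix.of fun a b => ((v a * v b : ℝ) : ℂ)) *ᵥ x)
      = star (∑ a, (v a : ℂ) * x a) * (∑ a, (v a : ℂ) * x a) := by
  have hs : star (∑ a, (v a : ℂ) * x a) = ∑ a, (v a : ℂ) * star (x a) := by
    rw [star_sum]
    exact Finset.sum_congr rfl fun a _ => by
      rw [star_mul']
      simp [Complex.star_def, Complex.conj_ofReal]
  rw [hs, Finset.sum_mul_sum]
  simp only [dotProduct, mulVec, Matrix.of_apply, Pi.star_apply]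
  refine Finset.sum_congr rfl fun a _ => ?_
  simp only [dotProduct, Finset.mul_sum]
  refine Finset.sum_congr rfl fun b _ => ?_
  push_cast
  ring

lemma aux_psd {ι n : Type*} [Fintype ι] [Fintype n] [DecidableEq n]
    (c : ι → ℝ) (hc : ∀ i, 0 ≤ c i) (v : ι → n → ℝ) :
    (∑ i, ((c i : ℝ) : ℂ) • Matrix.of (fun a b => ((v i a * v i b : ℝ) : ℂ))).PosSemidef := by
  classical
  refine Finset.sum_induction _ _ (fun A B hA hB => hA.add hB) Matrix.PosSemidef.zero
    fun i _ => Matrix.posSemidef_iff_dotProduct_mulVec.mpr ⟨?_, fun x => ?_⟩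
  · ext a b
    simp only [Matrix.conjTranspose_apply, Matrix.smul_apply, Matrix.of_apply, smul_eq_mul,
      star_mul', Complex.star_def, Complex.conj_ofReal]
    push_cast
    ring
  · rw [smul_mulVec, dotProduct_smul, smul_eq_mul, aux_outer_quad]
    exact mul_nonneg (by exact_mod_cast Complex.zero_le_real.mpr (hc i))
      (star_mul_self_nonneg _)

lemma aux_key (a b w k : ℝ) (hne1 : (a:ℂ) + b * Complex.I ≠ 0) (hb : b = w * k) :
    -(1/2 : ℂ) * Complex.I *
        (((a:ℂ) + b * Complex.I)⁻¹ - ((starRingEnd ℂ) ((a:ℂ) + b * Complex.I))⁻¹)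
      = -(w : ℂ) * ((k / (a ^ 2 + b ^ 2) : ℝ) : ℂ) := by
  have hcc : (starRingEnd ℂ) ((a : ℂ) + (b : ℂ) * Complex.I) = (a : ℂ) - (b : ℂ) * Complex.I := by
    rw [map_add, _root_.map_mul, Complex.conj_ofReal, Complex.conj_ofReal, Complex.conj_I]
    ring
  have hne2 : (a : ℂ) - (b : ℂ) * Complex.I ≠ 0 := by
    rw [← hcc]
    exact (starRingEnd ℂ).injective.ne_iff' (map_zero _) |>.mpr hne1
  rw [hcc, inv_sub_inv hne1 hne2]
  have hmul : ((a:ℂ) + b * Complex.I) * ((a:ℂ) - b * Complex.I) = ((a^2 + b^2 : ℝ) : ℂ) := by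
    push_cast
    linear_combination (-(b:ℂ)^2) * Complex.I_sq
  rw [hmul]
  have hbc : (b:ℂ) = (w:ℂ) * (k:ℂ) := by rw [hb]; push_cast; ring
  push_cast
  rw [mul_div_assoc', mul_div_assoc']
  congr 1
  linear_combination (b:ℂ) * Complex.I_sq - hbc

theorem flexible_structure_neg_imaginary (N m : ℕ) (hN : 1 ≤ N) (hm : 1 ≤ m)
    (κ ωn : Fin N → ℝ) (hκ : ∀ i, 0 < κ i) (hω : ∀ i, 0 < ωn i)
    (ψ : Fin N → Fin m → ℝ) :
    ∀ ω : ℝ, 0 ≤ ω →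
      (∀ i, (Complex.I * ω) ^ 2 + (κ i : ℂ) * (Complex.I * ω) + ((ωn i : ℂ)) ^ 2 ≠ 0) ∧
      ((-(1 / 2 : ℂ) * Complex.I) •
          ((∑ i, ((Complex.I * ω) ^ 2 + (κ i : ℂ) * (Complex.I * ω) + ((ωn i : ℂ)) ^ 2)⁻¹ •
              Matrix.of (fun a b => ((ψ i a * ψ i b : ℝ) : ℂ))) -
            (∑ i, ((Complex.I * ω) ^ 2 + (κ i : ℂ) * (Complex.I * ω) + ((ωn i : ℂ)) ^ 2)⁻¹ •
              Matrix.of (fun a b => ((ψ i a * ψ i b : ℝ) : ℂ)))ᴴ) =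
        (-(ω : ℂ)) • ∑ i, ((κ i / ((ωn i ^ 2 - ω ^ 2) ^ 2 + ω ^ 2 * κ i ^ 2) : ℝ) : ℂ) •
              Matrix.of (fun a b => ((ψ i a * ψ i b : ℝ) : ℂ))) ∧
      (-((-(1 / 2 : ℂ) * Complex.I) •
          ((∑ i, ((Complex.I * ω) ^ 2 + (κ i : ℂ) * (Complex.I * ω) + ((ωn i : ℂ)) ^ 2)⁻¹ •
              Matrix.of (fun a b => ((ψ i a * ψ i b : ℝ) : ℂ))) -
            (∑ i, ((Complex.I * ω) ^ 2 + (κ i : ℂ) * (Complex.I * ω) + ((ωn i : ℂ)) ^ 2)⁻¹ •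
              Matrix.of (fun a b => ((ψ i a * ψ i b : ℝ) : ℂ)))ᴴ))).PosSemidef := by
  intro ω hω0
  have hden : ∀ i, 0 < (ωn i ^ 2 - ω ^ 2) ^ 2 + ω ^ 2 * κ i ^ 2 := by
    intro i
    rcases eq_or_lt_of_le hω0 with h0 | h0
    · have h1 : ωn i ^ 2 - ω ^ 2 = ωn i ^ 2 := by rw [← h0]; ring
      rw [h1, ← h0]
      have := hω i
      positivity
    · have hk := hκ i
      have h2 : 0 < ω ^ 2 * κ i ^ 2 := by positivity
      nlinarith [sq_nonneg (ωn i ^ 2 - ω ^ 2)]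
  have hd : ∀ i, (Complex.I * ω) ^ 2 + (κ i : ℂ) * (Complex.I * ω) + ((ωn i : ℂ)) ^ 2
      = ((ωn i ^ 2 - ω ^ 2 : ℝ) : ℂ) + ((ω * κ i : ℝ) : ℂ) * Complex.I := by
    intro i
    push_cast
    linear_combination (ω : ℂ) ^ 2 * Complex.I_sq
  have hne : ∀ i, (Complex.I * ω) ^ 2 + (κ i : ℂ) * (Complex.I * ω) + ((ωn i : ℂ)) ^ 2 ≠ 0 := by
    intro i
    rw [hd i]
    set a : ℝ := ωn i ^ 2 - ω ^ 2 with ha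
    set b : ℝ := ω * κ i with hb
    intro h
    simp only [Complex.ext_iff, Complex.add_re, Complex.ofReal_re, Complex.mul_re,
      Complex.I_re, Complex.I_im, Complex.ofReal_im, Complex.zero_re, Complex.add_im,
      Complex.mul_im, Complex.zero_im] at h
    obtain ⟨h1, h2⟩ := h
    have hD := hden i
    rw [ha, hb] at *
    nlinarith [sq_nonneg (ωn i ^ 2 - ω ^ 2), sq_nonneg (ω * κ i)]
  have key : ∀ i, (-(1 / 2 : ℂ) * Complex.I) *
      ((((Complex.I * ω) ^ 2 + (κ i : ℂ) * (Complex.I * ω) + ((ωn i : ℂ)) ^ 2)⁻¹) -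
        ((starRingEnd ℂ) ((Complex.I * ω) ^ 2 + (κ i : ℂ) * (Complex.I * ω) + ((ωn i : ℂ)) ^ 2))⁻¹)
      = (-(ω : ℂ)) * ((κ i / ((ωn i ^ 2 - ω ^ 2) ^ 2 + ω ^ 2 * κ i ^ 2) : ℝ) : ℂ) := by
    intro i
    have hD : (ωn i ^ 2 - ω ^ 2) ^ 2 + ω ^ 2 * κ i ^ 2
        = (ωn i ^ 2 - ω ^ 2) ^ 2 + (ω * κ i) ^ 2 := by ring
    have hne1 : ((ωn i ^ 2 - ω ^ 2 : ℝ) : ℂ) + ((ω * κ i : ℝ) : ℂ) * Complex.I ≠ 0 := by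
      rw [← hd i]; exact hne i
    rw [hd i, hD]
    exact aux_key _ _ _ _ hne1 rfl
  have hId : (-(1 / 2 : ℂ) * Complex.I) •
          ((∑ i, ((Complex.I * ω) ^ 2 + (κ i : ℂ) * (Complex.I * ω) + ((ωn i : ℂ)) ^ 2)⁻¹ •
              Matrix.of (fun a b => ((ψ i a * ψ i b : ℝ) : ℂ))) -
            (∑ i, ((Complex.I * ω) ^ 2 + (κ i : ℂ) * (Complex.I * ω) + ((ωn i : ℂ)) ^ 2)⁻¹ •
              Matrix.of (fun a b => ((ψ i a * ψ i b : ℝ) : ℂ)))ᴴ) =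
        (-(ω : ℂ)) • ∑ i, ((κ i / ((ωn i ^ 2 - ω ^ 2) ^ 2 + ω ^ 2 * κ i ^ 2) : ℝ) : ℂ) •
              Matrix.of (fun a b => ((ψ i a * ψ i b : ℝ) : ℂ)) := by
    ext a b
    simp only [Matrix.smul_apply, Matrix.sub_apply, Matrix.sum_apply, Matrix.conjTranspose_apply,
      Matrix.of_apply, smul_eq_mul, Complex.star_def, map_sum, _root_.map_mul, map_inv₀, Complex.conj_ofReal]
    rw [← Finset.sum_sub_distrib, Finset.mul_sum, Finset.mul_sum]
    refine Finset.sum_congr rfl fun i _ => ?_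
    have hk := key i
    have hr : ((ψ i b * ψ i a : ℝ) : ℂ) = ((ψ i a * ψ i b : ℝ) : ℂ) := by push_cast; ring
    rw [hr]
    linear_combination ((ψ i a * ψ i b : ℝ) : ℂ) * hk
  refine ⟨hne, hId, ?_⟩
  rw [hId, neg_smul, neg_neg, Finset.smul_sum]
  have hrw : ∀ i : Fin N, (ω : ℂ) • (((κ i / ((ωn i ^ 2 - ω ^ 2) ^ 2 + ω ^ 2 * κ i ^ 2) : ℝ) : ℂ) •
        Matrix.of (fun a b => ((ψ i a * ψ i b : ℝ) : ℂ)))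
      = ((ω * (κ i / ((ωn i ^ 2 - ω ^ 2) ^ 2 + ω ^ 2 * κ i ^ 2)) : ℝ) : ℂ) •
        Matrix.of (fun a b => ((ψ i a * ψ i b : ℝ) : ℂ)) := by
    intro i
    rw [smul_smul]
    congr 1
    push_cast
    ring
  rw [Finset.sum_congr rfl fun i _ => hrw i]
  exact aux_psd _ (fun i => mul_nonneg hω0 (div_nonneg (hκ i).le (hden i).le)) ψ
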